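/- (Fite–Leighton–Wintner oscillation theorem) Let p, q : [a,∞) → ℝ be continuous with p(t) > 0 for all t ≥ a, and assume ∫_a^∞ e_0(t,a)/p(t) d_α t = ∞ and ∫_a^∞ q(t) d_α t = ∞. Then the equation D^α[p·D^α x](t) + q(t)·x(t) = 0 is oscillatory on [a,∞); that is, every nontrivial solution of the equation has infinitely many zeros in [a,∞). -/

import Mathlib

open Set Filter

/-- The conformable proportional derivative `D^α f(t) = κ₁(t) f(t) + κ₀(t) f'(t)`. -/
noncomputable def Dconf (κ₀ κ₁ : ℝ → ℝ) (f : ℝ → ℝ) (t : ℝ) : ℝ :=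
  κ₁ t * f t + κ₀ t * deriv f t

/-- The conformable exponential `e_0(t,s) = exp(-∫_s^t κ₁/κ₀)`. -/
noncomputable def e0 (κ₀ κ₁ : ℝ → ℝ) (t s : ℝ) : ℝ :=
  Real.exp (-(∫ τ in s..t, κ₁ τ / κ₀ τ))

/-- `x` is a solution of the homogeneous self-adjoint equation
`D^α[p D^α x] + q x = 0` on `J`. -/
def IsSolutionSA (κ₀ κ₁ p q : ℝ → ℝ) (J : Set ℝ) (x : ℝ → ℝ) : Prop :=
  (∀ t ∈ J, DifferentiableAt ℝ x t) ∧
  ContinuousOn (Dconf κ₀ κ₁ x) J ∧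
  (∀ t ∈ J, DifferentiableAt ℝ (fun s => p s * Dconf κ₀ κ₁ x s) t) ∧
  ContinuousOn (Dconf κ₀ κ₁ (fun s => p s * Dconf κ₀ κ₁ x s)) J ∧
  ∀ t ∈ J, Dconf κ₀ κ₁ (fun s => p s * Dconf κ₀ κ₁ x s) t + q t * x t = 0

/-- Fite–Leighton–Wintner theorem: if
`∫_a^∞ e₀(t,a)/p(t) d_α t = ∞` and `∫_a^∞ q(t) d_α t = ∞`, then
`D^α[p D^α x] + q x = 0` is oscillatory on `[a,∞)`: every nontrivial solution
has infinitely many zeros in `[a,∞)`. -/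
theorem fite_leighton_wintner
    (a : ℝ) (κ₀ κ₁ : ℝ → ℝ)
    (hκ₀c : ContinuousOn κ₀ (Ici a)) (hκ₁c : ContinuousOn κ₁ (Ici a))
    (hκ₀pos : ∀ t ∈ Ici a, 0 < κ₀ t) (hκ₁nn : ∀ t ∈ Ici a, 0 ≤ κ₁ t)
    (p q : ℝ → ℝ)
    (hpc : ContinuousOn p (Ici a)) (hqc : ContinuousOn q (Ici a))
    (hp : ∀ t ∈ Ici a, 0 < p t)
    (hpint : Tendsto (fun b => ∫ t in a..b, e0 κ₀ κ₁ t a / (p t * κ₀ t))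
      atTop atTop)
    (hqint : Tendsto (fun b => ∫ t in a..b, q t / κ₀ t) atTop atTop) :
    ∀ x : ℝ → ℝ, IsSolutionSA κ₀ κ₁ p q (Ici a) x →
      (∃ t ∈ Ici a, x t ≠ 0) →
      {t | t ∈ Ici a ∧ x t = 0}.Infinite := by
  intro x hx _hnt
  by_contra hinf
  rw [Set.not_infinite] at hinf
  obtain ⟨hxdiff, hDxc, hudiff, hDuc, heq⟩ := hx
  set u : ℝ → ℝ := fun s => p s * Dconf κ₀ κ₁ x s with hudef
  -- a point `T > a` beyond which `x` does not vanish
  obtain ⟨T, hTa, hxT⟩ : ∃ T, a < T ∧ ∀ t, T ≤ t → x t ≠ 0 := by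
    refine ⟨max a (sSup {t | t ∈ Ici a ∧ x t = 0}) + 1,
      lt_of_le_of_lt (le_max_left a _) (lt_add_one _), ?_⟩
    intro t ht h0
    have haT : a < max a (sSup {t | t ∈ Ici a ∧ x t = 0}) + 1 :=
      lt_of_le_of_lt (le_max_left a _) (lt_add_one _)
    have htmem : t ∈ {s | s ∈ Ici a ∧ x s = 0} := ⟨le_of_lt (lt_of_lt_of_le haT ht), h0⟩
    have h1 : t ≤ sSup {s | s ∈ Ici a ∧ x s = 0} := le_csSup hinf.bddAbove htmem
    exact lt_irrefl t
      (lt_of_le_of_lt (h1.trans (le_max_right a _)) (lt_of_lt_of_le (lt_add_one _) ht))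
  have hIT : ∀ t : ℝ, T ≤ t → t ∈ Ici a := fun t ht => le_of_lt (lt_of_lt_of_le hTa ht)
  have hsub : Ici T ⊆ Ici a := fun t ht => hIT t ht
  -- basic continuity
  have hxc : ContinuousOn x (Ici a) := fun t ht => (hxdiff t ht).continuousAt.continuousWithinAt
  have huc : ContinuousOn u (Ici a) := hpc.mul hDxc
  -- interval integrability helper
  have hii : ∀ (f : ℝ → ℝ) (r c b : ℝ), r ≤ c → c ≤ b → ContinuousOn f (Ici r) →
      IntervalIntegrable f MeasureTheory.volume c b := by
    intro f r c b hrc hcb hf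
    apply (hf.mono ?_).intervalIntegrable
    rw [Set.uIcc_of_le hcb]
    intro t ht
    exact le_trans hrc ht.1
  -- derivatives of x and u
  have hx' : ∀ t ∈ Ici a, HasDerivAt x ((u t / p t - κ₁ t * x t) / κ₀ t) t := by
    intro t ht
    have hp0 : p t ≠ 0 := (hp t ht).ne'
    have hk0 : κ₀ t ≠ 0 := (hκ₀pos t ht).ne'
    have hd : deriv x t = (u t / p t - κ₁ t * x t) / κ₀ t := by
      have hut : u t = p t * (κ₁ t * x t + κ₀ t * deriv x t) := rfl
      rw [hut]
      field_simp
      ring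
    exact hd ▸ (hxdiff t ht).hasDerivAt
  have hu' : ∀ t ∈ Ici a, HasDerivAt u ((-(q t * x t) - κ₁ t * u t) / κ₀ t) t := by
    intro t ht
    have hk0 : κ₀ t ≠ 0 := (hκ₀pos t ht).ne'
    have he : κ₁ t * u t + κ₀ t * deriv u t + q t * x t = 0 := heq t ht
    have hd : deriv u t = (-(q t * x t) - κ₁ t * u t) / κ₀ t := by
      field_simp
      linarith
    exact hd ▸ (hudiff t ht).hasDerivAt
  -- the Riccati variable
  set w : ℝ → ℝ := fun t => u t / x t with hwdef
  have hw' : ∀ t, T ≤ t → HasDerivAt w (-(q t / κ₀ t) - w t ^ 2 / (p t * κ₀ t)) t := by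
    intro t ht
    have hta := hIT t ht
    have hx0 : x t ≠ 0 := hxT t ht
    have hp0 : p t ≠ 0 := (hp t hta).ne'
    have hk0 : κ₀ t ≠ 0 := (hκ₀pos t hta).ne'
    have h := (hu' t hta).div (hx' t hta) hx0
    convert h using 1
    · rfl
    · rfl
    · rfl
    simp only [hwdef]
    field_simp
    ring
  have hwc : ContinuousOn w (Ici T) :=
    (huc.mono hsub).div (hxc.mono hsub) fun t ht => hxT t ht
  -- continuity of the pieces
  have hqκc : ContinuousOn (fun t => q t / κ₀ t) (Ici a) :=
    hqc.div hκ₀c fun t ht => (hκ₀pos t ht).ne'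
  have hpκne : ∀ t ∈ Ici a, p t * κ₀ t ≠ 0 := fun t ht =>
    (mul_pos (hp t ht) (hκ₀pos t ht)).ne'
  have hf2c : ContinuousOn (fun t => w t ^ 2 / (p t * κ₀ t)) (Ici T) :=
    (hwc.pow 2).div ((hpc.mono hsub).mul (hκ₀c.mono hsub)) fun t ht => hpκne t (hsub ht)
  have hf2nn : ∀ t, T ≤ t → 0 ≤ w t ^ 2 / (p t * κ₀ t) := fun t ht =>
    div_nonneg (sq_nonneg _) (mul_pos (hp t (hIT t ht)) (hκ₀pos t (hIT t ht))).le
  -- fundamental theorem of calculus for w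
  have hFTC : ∀ b, T ≤ b → w b - w T =
      -(∫ t in T..b, q t / κ₀ t) - ∫ t in T..b, w t ^ 2 / (p t * κ₀ t) := by
    intro b hb
    have h1 : (∫ t in T..b, (-(q t / κ₀ t) - w t ^ 2 / (p t * κ₀ t))) = w b - w T := by
      apply intervalIntegral.integral_eq_sub_of_hasDerivAt
      · intro t ht
        rw [Set.uIcc_of_le hb] at ht
        exact hw' t ht.1
      · exact hii _ T T b le_rfl hb (((hqκc.mono hsub).neg).sub hf2c)
    have h2 : (∫ t in T..b, (-(q t / κ₀ t) - w t ^ 2 / (p t * κ₀ t)))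
        = (∫ t in T..b, -(q t / κ₀ t)) - ∫ t in T..b, w t ^ 2 / (p t * κ₀ t) :=
      intervalIntegral.integral_sub (hii _ T T b le_rfl hb ((hqκc.mono hsub).neg))
        (hii _ T T b le_rfl hb hf2c)
    have h3 : (∫ t in T..b, -(q t / κ₀ t)) = -(∫ t in T..b, q t / κ₀ t) :=
      intervalIntegral.integral_neg
    linarith
  -- divergence of ∫_T^b q/κ₀
  have hQtop : Tendsto (fun b => ∫ t in T..b, q t / κ₀ t) atTop atTop := by
    have h0 := tendsto_atTop_add_const_right atTop (-(∫ t in a..T, q t / κ₀ t)) hqint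
    apply h0.congr'
    filter_upwards [eventually_ge_atTop T] with b hb
    have hadj := intervalIntegral.integral_add_adjacent_intervals
      (hii (fun t => q t / κ₀ t) a a T le_rfl hTa.le hqκc)
      (hii (fun t => q t / κ₀ t) a T b hTa.le hb hqκc)
    linarith
  -- choose S
  obtain ⟨S, hS⟩ := eventually_atTop.mp
    ((hQtop.eventually_ge_atTop (w T + 1)).and (eventually_gt_atTop T))
  have hTS : T < S := (hS S le_rfl).2
  have hkey : ∀ t, S ≤ t → 1 + (∫ τ in T..t, w τ ^ 2 / (p τ * κ₀ τ)) ≤ -w t := by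
    intro t ht
    have h1 := (hS t ht).1
    have h2 := hFTC t (hTS.le.trans ht)
    linarith
  -- the function ρ
  set ρ : ℝ → ℝ := fun t => ∫ τ in S..t, w τ ^ 2 / (p τ * κ₀ τ) with hρdef
  have hρnn : ∀ t, S ≤ t → 0 ≤ ρ t := fun t ht =>
    intervalIntegral.integral_nonneg ht fun τ hτ => hf2nn τ (hTS.le.trans hτ.1)
  have hsplit : ∀ t, S ≤ t →
      (∫ τ in T..t, w τ ^ 2 / (p τ * κ₀ τ)) = (∫ τ in T..S, w τ ^ 2 / (p τ * κ₀ τ)) + ρ t := by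
    intro t ht
    exact (intervalIntegral.integral_add_adjacent_intervals
      (hii _ T T S le_rfl hTS.le hf2c) (hii _ T S t hTS.le ht hf2c)).symm
  have hRSnn : 0 ≤ ∫ τ in T..S, w τ ^ 2 / (p τ * κ₀ τ) :=
    intervalIntegral.integral_nonneg hTS.le fun τ hτ => hf2nn τ hτ.1
  have hkey2 : ∀ t, S ≤ t → 1 + ρ t ≤ -w t := by
    intro t ht
    have h1 := hkey t ht
    have h2 := hsplit t ht
    linarith
  have hρ' : ∀ t, S ≤ t → HasDerivAt ρ (w t ^ 2 / (p t * κ₀ t)) t := by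
    intro t ht
    have hmem : t ∈ Ioi T := lt_of_lt_of_le hTS ht
    exact intervalIntegral.integral_hasDerivAt_right
      (hii _ T S t hTS.le ht hf2c)
      ((hf2c.mono Ioi_subset_Ici_self).stronglyMeasurableAtFilter isOpen_Ioi t hmem)
      ((hf2c.mono Ioi_subset_Ici_self).continuousAt (Ioi_mem_nhds hmem))
  have hρc : ContinuousOn ρ (Ici S) := fun t ht =>
    (hρ' t ht).continuousAt.continuousWithinAt
  have hρpos : ∀ t, S ≤ t → 0 < 1 + ρ t := by
    intro t ht
    have := hρnn t ht
    linarith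
  have hgc : ContinuousOn (fun t => w t ^ 2 / (p t * κ₀ t) / (1 + ρ t) ^ 2) (Ici S) :=
    (hf2c.mono (Ici_subset_Ici.mpr hTS.le)).div ((continuousOn_const.add hρc).pow 2)
      fun t ht => pow_ne_zero 2 (hρpos t ht).ne'
  have hinvc : ContinuousOn (fun t => 1 / (p t * κ₀ t)) (Ici a) :=
    continuousOn_const.div (hpc.mul hκ₀c) hpκne
  -- the crucial bound
  have hbound : ∀ b, S ≤ b → (∫ t in S..b, 1 / (p t * κ₀ t)) ≤ 1 := by
    intro b hb
    have hFTC2 : (∫ t in S..b, w t ^ 2 / (p t * κ₀ t) / (1 + ρ t) ^ 2)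
        = -(1 + ρ b)⁻¹ - -(1 + ρ S)⁻¹ := by
      apply intervalIntegral.integral_eq_sub_of_hasDerivAt (f := fun t => -(1 + ρ t)⁻¹)
      · intro t ht
        rw [Set.uIcc_of_le hb] at ht
        have h1 := (hρ' t ht.1).const_add 1
        have h2 := (h1.inv (hρpos t ht.1).ne').neg
        convert h2 using 1
        · rfl
        field_simp
      · exact hii _ S S b le_rfl hb hgc
    have hρS : ρ S = 0 := intervalIntegral.integral_same
    have hcmp : (∫ t in S..b, 1 / (p t * κ₀ t))
        ≤ ∫ t in S..b, w t ^ 2 / (p t * κ₀ t) / (1 + ρ t) ^ 2 := by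
      apply intervalIntegral.integral_mono_on hb
        (hii _ a S b (hIT S hTS.le) hb hinvc) (hii _ S S b le_rfl hb hgc)
      intro t ht
      have htS : S ≤ t := ht.1
      have hta : t ∈ Ici a := hIT t (hTS.le.trans htS)
      have hc : 0 < p t * κ₀ t := mul_pos (hp t hta) (hκ₀pos t hta)
      have hA : 0 < 1 + ρ t := hρpos t htS
      have hAw : 1 + ρ t ≤ -w t := hkey2 t htS
      have hsq : (1 + ρ t) ^ 2 ≤ w t ^ 2 := by nlinarith
      rw [div_div, div_le_div_iff₀ hc (by positivity)]
      nlinarith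
    have hinvb : 0 < (1 + ρ b)⁻¹ := by
      have := hρpos b hb
      positivity
    have hval : -(1 + ρ b)⁻¹ - -(1 + ρ S)⁻¹ ≤ 1 := by
      rw [hρS]
      norm_num
      linarith [hρpos b hb]
    calc (∫ t in S..b, 1 / (p t * κ₀ t))
        ≤ ∫ t in S..b, w t ^ 2 / (p t * κ₀ t) / (1 + ρ t) ^ 2 := hcmp
      _ = -(1 + ρ b)⁻¹ - -(1 + ρ S)⁻¹ := hFTC2
      _ ≤ 1 := hval
  -- divergence of ∫_S^b 1/(p κ₀)
  have he0le : ∀ t, a ≤ t → e0 κ₀ κ₁ t a ≤ 1 := by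
    intro t ht
    rw [e0, Real.exp_le_one_iff, neg_nonpos]
    exact intervalIntegral.integral_nonneg ht fun τ hτ =>
      div_nonneg (hκ₁nn τ hτ.1) (hκ₀pos τ hτ.1).le
  have he0int : ∀ b, a ≤ b → IntervalIntegrable (fun t => e0 κ₀ κ₁ t a / (p t * κ₀ t))
      MeasureTheory.volume a b := by
    intro b hb
    have hint : MeasureTheory.IntegrableOn (fun τ => κ₁ τ / κ₀ τ) (uIcc a b) := by
      rw [Set.uIcc_of_le hb]
      exact ((hκ₁c.div hκ₀c fun t ht => (hκ₀pos t ht).ne').mono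
        Icc_subset_Ici_self).integrableOn_Icc
    have hprim : ContinuousOn (fun t => ∫ τ in a..t, κ₁ τ / κ₀ τ) (Icc a b) := by
      have := intervalIntegral.continuousOn_primitive_interval hint
      rwa [Set.uIcc_of_le hb] at this
    have he0c : ContinuousOn (fun t => e0 κ₀ κ₁ t a) (Icc a b) := by
      simp only [e0]
      exact Real.continuous_exp.comp_continuousOn hprim.neg
    have : ContinuousOn (fun t => e0 κ₀ κ₁ t a / (p t * κ₀ t)) (Icc a b) :=
      he0c.div ((hpc.mono Icc_subset_Ici_self).mul (hκ₀c.mono Icc_subset_Ici_self))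
        fun t ht => hpκne t ht.1
    apply (this.mono ?_).intervalIntegrable
    rw [Set.uIcc_of_le hb]
  have h1top : Tendsto (fun b => ∫ t in a..b, 1 / (p t * κ₀ t)) atTop atTop := by
    apply tendsto_atTop_mono' atTop ?_ hpint
    filter_upwards [eventually_ge_atTop a] with b hb
    apply intervalIntegral.integral_mono_on hb (he0int b hb) (hii _ a a b le_rfl hb hinvc)
    intro t ht
    have hta : t ∈ Ici a := ht.1
    have hc : 0 < p t * κ₀ t := mul_pos (hp t hta) (hκ₀pos t hta)
    exact (div_le_div_iff_of_pos_right hc).mpr (he0le t hta)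
  have hStop : Tendsto (fun b => ∫ t in S..b, 1 / (p t * κ₀ t)) atTop atTop := by
    have h0 := tendsto_atTop_add_const_right atTop (-(∫ t in a..S, 1 / (p t * κ₀ t))) h1top
    apply h0.congr'
    filter_upwards [eventually_ge_atTop S] with b hb
    have hadj := intervalIntegral.integral_add_adjacent_intervals
      (hii _ a a S le_rfl (hIT S hTS.le) hinvc) (hii _ a S b (hIT S hTS.le) hb hinvc)
    linarith
  obtain ⟨b, hb⟩ := ((hStop.eventually_ge_atTop 2).and (eventually_ge_atTop S)).exists
  have := hbound b hb.2
  linarith [hb.1]
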